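/- Let P = conv(u_0, …, u_n) ⊆ ℝ^n be a full-dimensional lattice simplex, fix an index i and an integer k with 2 ≤ k ≤ min_{j≠i} l_{ij}, and let P_{i,k} be the associated k-dilation. Then P_{i,k} ⊆ P, and P_{i,k} is a lattice translate of the k-fold dilation of a lattice simplex: explicitly, P_{i,k} = u_i + k·Q where Q = conv({0} ∪ {((l_{ij} − r_{ij,k})/k)·ũ_{ij} : j ≠ i}) with ũ_{ij} = (u_j − u_i)/l_{ij} ∈ ℤ^n, and Q is a lattice simplex. -/

import Mathlib

open Finset Pointwise

noncomputable section

/-- The real point corresponding to a lattice point. -/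
def toR {n : ℕ} (v : Fin n → ℤ) : Fin n → ℝ := fun x => (v x : ℝ)

/-- The lattice simplex (as a subset of `ℝ^n`) with the given lattice vertices. -/
def lsimplex {n m : ℕ} (u : Fin m → Fin n → ℤ) : Set (Fin n → ℝ) :=
  convexHull ℝ (Set.range fun i => toR (u i))

/-- The lattice length `l_{ij}` of the edge `u_i u_j`:
the gcd of the coordinates of `u_j - u_i`. -/
def latLen {n m : ℕ} (u : Fin m → Fin n → ℤ) (i j : Fin m) : ℕ :=
  Finset.univ.gcd fun x => (u j x - u i x).natAbs

/-- `r_{ij,k}`: the least nonnegative residue of `l_{ij}` modulo `k`. -/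
def rmod {n m : ℕ} (u : Fin m → Fin n → ℤ) (i j : Fin m) (k : ℕ) : ℕ :=
  latLen u i j % k

/-- The vertices of the `k`-dilation `P_{i,k}`: the vertex `u_i` together with, for `j ≠ i`,
the points `((l_{ij} - r_{ij,k})/l_{ij})·u_j + (r_{ij,k}/l_{ij})·u_i`. -/
def dilVert {n m : ℕ} (u : Fin m → Fin n → ℤ) (i : Fin m) (k : ℕ) (j : Fin m) :
    Fin n → ℝ :=
  if j = i then toR (u i)
  else
    ((((latLen u i j : ℝ) - (rmod u i j k : ℝ)) / (latLen u i j : ℝ)) • toR (u j))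
      + (((rmod u i j k : ℝ) / (latLen u i j : ℝ)) • toR (u i))

/-- The `k`-dilation `P_{i,k}`. -/
def dil {n m : ℕ} (u : Fin m → Fin n → ℤ) (i : Fin m) (k : ℕ) : Set (Fin n → ℝ) :=
  convexHull ℝ (Set.range (dilVert u i k))

/-- The primitive edge vector `ũ_{ij} = (u_j - u_i)/l_{ij}`. -/
def primVec {n m : ℕ} (u : Fin m → Fin n → ℤ) (i j : Fin m) : Fin n → ℝ :=
  (latLen u i j : ℝ)⁻¹ • (toR (u j) - toR (u i))

/-- The translated `k`-dilation `P_{i,k,t} = P_{i,k} + Σ_{j ≠ i} t_j ũ_{ij}`. -/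
def dilT {n m : ℕ} (u : Fin m → Fin n → ℤ) (i : Fin m) (k : ℕ) (t : Fin m → ℕ) :
    Set (Fin n → ℝ) :=
  (fun y => y + ∑ j ∈ Finset.univ.erase i, (t j : ℝ) • primVec u i j) '' dil u i k

/-- `P_{i,k} ⊆ P`, and `P_{i,k} = u_i + k·Q` where
`Q = conv({0} ∪ {((l_{ij} − r_{ij,k})/k)·ũ_{ij} : j ≠ i})` is a lattice simplex
(with the primitive edge vectors `ũ_{ij} = (u_j − u_i)/l_{ij}` lattice vectors). -/
theorem dilation_is_dilated_lattice_simplex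
    (n : ℕ) (u : Fin (n + 1) → Fin n → ℤ)
    (hind : AffineIndependent ℝ fun i => toR (u i))
    (i : Fin (n + 1)) (k : ℕ) (hk : 2 ≤ k)
    (hkl : ∀ j, j ≠ i → k ≤ latLen u i j)
    (Qv : Fin (n + 1) → Fin n → ℝ)
    (hQv : ∀ j, Qv j =
      if j = i then 0
      else (((latLen u i j : ℝ) - (rmod u i j k : ℝ)) / (k : ℝ)) • primVec u i j) :
    dil u i k ⊆ lsimplex u ∧
    (∀ j, j ≠ i → ∀ x, ∃ z : ℤ, primVec u i j x = (z : ℝ)) ∧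
    (∀ j x, ∃ z : ℤ, Qv j x = (z : ℝ)) ∧
    AffineIndependent ℝ Qv ∧
    dil u i k = (fun y => toR (u i) + (k : ℝ) • y) '' convexHull ℝ (Set.range Qv) := by
  have hk0 : (k : ℝ) ≠ 0 := Nat.cast_ne_zero.mpr (by omega)
  have hlpos : ∀ j, j ≠ i → 0 < latLen u i j := fun j hj =>
    lt_of_lt_of_le (by omega) (hkl j hj)
  have hl0 : ∀ j, j ≠ i → (latLen u i j : ℝ) ≠ 0 := fun j hj =>
    Nat.cast_ne_zero.mpr (hlpos j hj).ne'
  -- primitive vectors are lattice vectors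
  have hprim : ∀ j, j ≠ i → ∀ x, ∃ z : ℤ, primVec u i j x = (z : ℝ) := by
    intro j hj x
    have hdvd1 : latLen u i j ∣ (u j x - u i x).natAbs :=
      Finset.gcd_dvd (Finset.mem_univ x)
    have hdvd : (latLen u i j : ℤ) ∣ (u j x - u i x) :=
      dvd_trans (Int.natCast_dvd_natCast.mpr hdvd1) (Int.natAbs_dvd.mpr dvd_rfl)
    obtain ⟨z, hz⟩ := hdvd
    refine ⟨z, ?_⟩
    have hzR : (u j x : ℝ) - (u i x : ℝ) = (latLen u i j : ℝ) * (z : ℝ) := by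
      exact_mod_cast congrArg (fun t : ℤ => (t : ℝ)) hz
    simp only [primVec, toR, Pi.smul_apply, Pi.sub_apply, smul_eq_mul]
    rw [hzR]
    exact inv_mul_cancel_left₀ (hl0 j hj) _
  -- the residue is strictly less than the lattice length
  have hrlt : ∀ j, j ≠ i → rmod u i j k < latLen u i j := by
    intro j hj
    exact lt_of_lt_of_le (Nat.mod_lt _ (by omega)) (hkl j hj)
  -- Qv has integer coordinates
  have hQint : ∀ j x, ∃ z : ℤ, Qv j x = (z : ℝ) := by
    intro j x
    by_cases hj : j = i
    · exact ⟨0, by simp [hQv, hj]⟩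
    · obtain ⟨z, hz⟩ := hprim j hj x
      refine ⟨(latLen u i j / k : ℕ) * z, ?_⟩
      have hmod : k * (latLen u i j / k) + rmod u i j k = latLen u i j :=
        Nat.div_add_mod _ _
      have hsub : (latLen u i j : ℝ) - (rmod u i j k : ℝ) =
          (k : ℝ) * ((latLen u i j / k : ℕ) : ℝ) := by
        have := congrArg (fun t : ℕ => (t : ℝ)) hmod
        push_cast at this ⊢
        linarith
      have hq : Qv j x = (k : ℝ) * ((latLen u i j / k : ℕ) : ℝ) / (k : ℝ) * (z : ℝ) := by
        simp only [hQv, if_neg hj, Pi.smul_apply, smul_eq_mul, hz, hsub]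
      rw [hq, mul_comm (k : ℝ), mul_div_assoc, div_self hk0, mul_one,
        Int.cast_mul, Int.cast_natCast]
  -- key identity: dilVert j = u_i + k • Qv j
  have hvert : ∀ j, dilVert u i k j = toR (u i) + (k : ℝ) • Qv j := by
    intro j
    by_cases hj : j = i
    · simp [dilVert, hQv, hj]
    · have hlj := hl0 j hj
      funext x
      simp only [dilVert, if_neg hj, hQv, primVec, toR, Pi.add_apply, Pi.smul_apply,
        Pi.sub_apply, smul_eq_mul]
      field_simp
      ring
  -- part 1: P_{i,k} ⊆ P
  have hsubset : dil u i k ⊆ lsimplex u := by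
    apply convexHull_min _ (convex_convexHull ℝ _)
    rintro _ ⟨j, rfl⟩
    by_cases hj : j = i
    · subst hj
      simp only [dilVert, if_pos rfl]
      exact subset_convexHull ℝ _ ⟨j, rfl⟩
    · have hlj := hl0 j hj
      have hr : (0:ℝ) ≤ (rmod u i j k : ℝ) / (latLen u i j : ℝ) := by positivity
      have hlr : (0:ℝ) ≤ ((latLen u i j : ℝ) - (rmod u i j k : ℝ)) / (latLen u i j : ℝ) := by
        have : (rmod u i j k : ℝ) ≤ (latLen u i j : ℝ) :=
          Nat.cast_le.mpr (hrlt j hj).le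
        apply div_nonneg (by linarith)
        positivity
      have hsum : ((latLen u i j : ℝ) - (rmod u i j k : ℝ)) / (latLen u i j : ℝ)
          + (rmod u i j k : ℝ) / (latLen u i j : ℝ) = 1 := by
        field_simp
        ring
      simp only [dilVert, if_neg hj]
      exact (convex_convexHull ℝ _)
        (subset_convexHull ℝ _ (Set.mem_range_self j)) (subset_convexHull ℝ _ (Set.mem_range_self i)) hlr hr hsum
  -- affine independence of Qv
  have hQi : Qv i = 0 := by simp [hQv]
  have hind' : AffineIndependent ℝ Qv := by
    rw [affineIndependent_iff_linearIndependent_vsub ℝ Qv i]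
    have hli := (affineIndependent_iff_linearIndependent_vsub ℝ (fun j => toR (u j)) i).mp hind
    set c : {x : Fin (n+1) // x ≠ i} → ℝ := fun j =>
      ((latLen u i j.1 : ℝ) - (rmod u i j.1 k : ℝ)) / (k : ℝ) * (latLen u i j.1 : ℝ)⁻¹ with hc
    have hc0 : ∀ j, c j ≠ 0 := by
      intro j
      have h1 : (rmod u i j.1 k : ℝ) < (latLen u i j.1 : ℝ) :=
        Nat.cast_lt.mpr (hrlt j.1 j.2)
      have h2 : (0:ℝ) < (latLen u i j.1 : ℝ) := by
        exact_mod_cast hlpos j.1 j.2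
      have hkpos : (0:ℝ) < (k : ℝ) := by positivity
      have h3 : (0:ℝ) < ((latLen u i j.1 : ℝ) - (rmod u i j.1 k : ℝ)) / (k : ℝ) :=
        div_pos (by linarith) hkpos
      simp only [hc]
      exact (mul_pos h3 (inv_pos.mpr h2)).ne'
    let w : {x : Fin (n+1) // x ≠ i} → ℝˣ := fun j => Units.mk0 (c j) (hc0 j)
    have := hli.units_smul w
    convert this using 1
    funext j
    simp only [Pi.smul_apply', Units.smul_def, Units.val_mk0, vsub_eq_sub, hQi, sub_zero]
    rw [hQv, if_neg j.2]
    simp only [primVec, smul_smul]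
    rfl
  -- the affine map y ↦ u_i + k • y
  let f : (Fin n → ℝ) →ᵃ[ℝ] (Fin n → ℝ) :=
    { toFun := fun y => toR (u i) + (k : ℝ) • y
      linear := (k : ℝ) • LinearMap.id
      map_vadd' := by
        intro p v
        simp only [LinearMap.smul_apply, LinearMap.id_apply, vadd_eq_add, smul_add]
        abel }
  have himg : dil u i k = (fun y => toR (u i) + (k : ℝ) • y) '' convexHull ℝ (Set.range Qv) := by
    have h1 : Set.range (dilVert u i k) = f '' Set.range Qv := by
      rw [← Set.range_comp]
      exact congrArg Set.range (funext fun j => hvert j)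
    have h2 : dil u i k = f '' convexHull ℝ (Set.range Qv) := by
      rw [AffineMap.image_convexHull]
      unfold dil
      rw [h1]
    exact h2
  exact ⟨hsubset, hprim, hQint, hind', himg⟩
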